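/- Let s, n be positive integers with s ≤ n. Then for every real number ξ, ∑_{p=1}^{s} (−1)^{s+p} · C(s−1, p−1) · (∏_{l=p}^{s−1} (n+l)/(n−s+l)) · ((1+ξ)^{s−p} − (1+ξ)^{n+p−1}) = −C(n−1, s−1)^{−1} · ∑_{k=2s−1}^{n+s−1} C(n+s−1, k) · C(k−s, s−1) · ξ^{k}. -/

import Mathlib

open Finset

/-- Key alternating Vandermonde-type sum, in two regimes. -/
private lemma keyS : ∀ (k c d : ℕ), d ≤ c →
    ∑ v ∈ range (d+1), (-1:ℤ)^v * ((c-v).choose (d-v)) * (k.choose v)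
      = if k ≤ c then ((c-k).choose d : ℤ) else (-1)^d * ((k-c+d-1).choose d) := by
  intro k
  induction k with
  | zero =>
    intro c d hdc
    rw [if_pos (Nat.zero_le c)]
    rw [Finset.sum_eq_single 0]
    · simp
    · intro v hv hv0
      have : (0:ℕ).choose v = 0 := Nat.choose_eq_zero_of_lt (Nat.pos_of_ne_zero hv0)
      simp [this]
    · simp
  | succ k ih =>
    intro c d hdc
    rcases Nat.eq_zero_or_pos d with hd | hd
    · subst hd
      simp only [range_one, sum_singleton, pow_zero, Nat.sub_zero, Nat.choose_zero_right,
        one_mul, mul_one]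
      split <;> simp
    · obtain ⟨e, rfl⟩ : ∃ e, d = e + 1 := ⟨d - 1, by omega⟩
      have hec : e ≤ c - 1 := by omega
      have step : ∑ v ∈ range (e+1+1), (-1:ℤ)^v * ((c-v).choose (e+1-v)) * ((k+1).choose v)
          = (∑ v ∈ range (e+1+1), (-1:ℤ)^v * ((c-v).choose (e+1-v)) * (k.choose v))
            - ∑ w ∈ range (e+1), (-1:ℤ)^w * ((c-1-w).choose (e-w)) * (k.choose w) := by
        rw [Finset.sum_range_succ' (fun v => (-1:ℤ)^v * ((c-v).choose (e+1-v)) * ((k+1).choose v)) (e+1),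
          Finset.sum_range_succ' (fun v => (-1:ℤ)^v * ((c-v).choose (e+1-v)) * (k.choose v)) (e+1)]
      -- rewrite each shifted term
        have hterm : ∀ x ∈ range (e+1),
            (-1:ℤ)^(x+1) * ((c-(x+1)).choose (e+1-(x+1)) : ℤ) * ((k+1).choose (x+1) : ℤ)
            = ((-1:ℤ)^(x+1) * ((c-(x+1)).choose (e+1-(x+1)) : ℤ) * (k.choose (x+1) : ℤ))
              - ((-1:ℤ)^x * ((c-1-x).choose (e-x) : ℤ) * (k.choose x : ℤ)) := by
          intro x _
          rw [Nat.choose_succ_succ k x]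
          rw [show c-(x+1) = c-1-x from by omega, show e+1-(x+1) = e-x from by omega]
          push_cast
          ring
        rw [Finset.sum_congr rfl hterm, Finset.sum_sub_distrib]
        simp only [Nat.choose_zero_right]
        ring
      rw [step, ih c (e+1) hdc, ih (c-1) e hec]
      split_ifs with h1 h2 h3 h3 h2 h3 h3
      · -- k ≤ c, k ≤ c-1, k+1 ≤ c
        rw [show c-k = (c-(k+1))+1 from by omega, show c-1-k = c-(k+1) from by omega,
          Nat.choose_succ_succ (c-(k+1)) e]
        push_cast
        ring
      · exfalso; omega
      · exfalso; omega
      · -- k ≤ c, ¬(k ≤ c-1) : k = c, ¬ (k+1 ≤ c)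
        rw [show c-k = 0 from by omega, show k-(c-1)+e-1 = e from by omega,
          show k+1-c+(e+1)-1 = e+1 from by omega,
          Nat.choose_eq_zero_of_lt (show 0 < e+1 from by omega), Nat.choose_self,
          Nat.choose_self]
        push_cast
        rw [pow_succ]
        ring
      · exfalso; omega
      · exfalso; omega
      · exfalso; omega
      · -- k > c
        rw [show k-(c-1)+e-1 = k-c+(e+1)-1 from by omega,
          show k+1-c+(e+1)-1 = (k-c+(e+1)-1)+1 from by omega,
          Nat.choose_succ_succ (k-c+(e+1)-1) e]
        push_cast
        rw [pow_succ]
        ring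

private lemma keyS_real (k c d : ℕ) (hdc : d ≤ c) :
    ∑ v ∈ range (d+1), (-1:ℝ)^v * ((c-v).choose (d-v) : ℝ) * (k.choose v : ℝ)
      = if k ≤ c then ((c-k).choose d : ℝ) else (-1)^d * ((k-c+d-1).choose d : ℝ) := by
  have h := keyS k c d hdc
  have h2 := congrArg (fun z : ℤ => (z : ℝ)) h
  push_cast at h2
  split_ifs at h2 ⊢ with hk
  · exact h2
  · exact h2

/-- `C(k-s, s-1)` written via the alternating sum, valid for `k ≥ s`. -/
private lemma fact1 (s k : ℕ) (hs : 0 < s) (hks : s ≤ k) :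
    ((k - s).choose (s-1) : ℝ)
      = (-1:ℝ)^(s-1) * ∑ v ∈ range s, (-1:ℝ)^v * ((2*s-2-v).choose (s-1-v) : ℝ) * (k.choose v : ℝ) := by
  have h := keyS_real k (2*s-2) (s-1) (by omega)
  rw [show s - 1 + 1 = s from by omega] at h
  rw [h]
  split_ifs with hk
  · have h1 : (k-s).choose (s-1) = 0 := Nat.choose_eq_zero_of_lt (by omega)
    have h2 : (2*s-2-k).choose (s-1) = 0 := Nat.choose_eq_zero_of_lt (by omega)
    rw [h1, h2]
    simp
  · rw [show k - (2*s-2) + (s-1) - 1 = k - s from by omega]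
    rw [← mul_assoc, ← pow_add]
    have he : Even (s - 1 + (s - 1)) := ⟨s - 1, rfl⟩
    rw [he.neg_one_pow, one_mul]

/-- Inner sum evaluation used in both the LOW and HIGH lemmas. -/
private lemma innerS (n s j : ℕ) (hs : 0 < s) (hsn : s ≤ n) (hj : j < s) :
    ∑ u ∈ range (s-j), (-1:ℝ)^u * ((2*s-2-j-u).choose (s-1-j-u) : ℝ) * ((n+s-1-j).choose u : ℝ)
      = (-1:ℝ)^(s-1-j) * ((n-1-j).choose (s-1-j) : ℝ) := by
  have h := keyS_real (n+s-1-j) (2*s-2-j) (s-1-j) (by omega)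
  rw [show s - 1 - j + 1 = s - j from by omega] at h
  rw [if_neg (by omega)] at h
  rw [show n+s-1-j - (2*s-2-j) + (s-1-j) - 1 = n-1-j from by omega] at h
  exact h

private lemma sign_combine (s j : ℕ) (hj : j < s) :
    (-1:ℝ)^(s-1) * (-1:ℝ)^(s-1-j) = (-1:ℝ)^j := by
  rw [← pow_add, show s - 1 + (s-1-j) = 2*(s-1-j) + j from by omega, pow_add, pow_mul,
    neg_one_sq, one_pow, one_mul]

/-- Binomial-type sum: `∑_k C(N,k) C(k,v) y^k = C(N,v) y^v (1+y)^(N-v)`. -/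
private lemma binom_aux (N v : ℕ) (hv : v ≤ N) (y : ℝ) :
    ∑ k ∈ range (N+1), (N.choose k : ℝ) * (k.choose v : ℝ) * y^k
      = (N.choose v : ℝ) * y^v * (1+y)^(N-v) := by
  have hsub : Finset.Ico v (N+1) ⊆ range (N+1) := by
    rw [Finset.range_eq_Ico]
    exact Finset.Ico_subset_Ico (Nat.zero_le v) le_rfl
  have hz : ∀ k ∈ range (N+1), k ∉ Finset.Ico v (N+1) →
      (N.choose k : ℝ) * (k.choose v : ℝ) * y^k = 0 := by
    intro k hk hk2
    rw [mem_range] at hk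
    rw [mem_Ico] at hk2
    rw [Nat.choose_eq_zero_of_lt (show k < v from by omega)]
    simp
  rw [← Finset.sum_subset hsub hz]
  rw [Finset.sum_Ico_eq_sum_range]
  rw [show N + 1 - v = (N - v) + 1 from by omega]
  have hterm : ∀ t ∈ range (N - v + 1),
      (N.choose (v+t) : ℝ) * ((v+t).choose v : ℝ) * y^(v+t)
        = ((N.choose v : ℝ) * y^v) * (((N-v).choose t : ℝ) * y^t) := by
    intro t ht
    rw [mem_range] at ht
    have hmul : N.choose (v+t) * (v+t).choose v = N.choose v * (N-v).choose t := by
      have := Nat.choose_mul (n := N) (Nat.le_add_right v t)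
      simpa using this
    have hmulR : (N.choose (v+t) : ℝ) * ((v+t).choose v : ℝ)
        = (N.choose v : ℝ) * ((N-v).choose t : ℝ) := by exact_mod_cast hmul
    rw [pow_add]
    linear_combination (y^v * y^t) * hmulR
  rw [Finset.sum_congr rfl hterm, ← Finset.mul_sum]
  have hbin : ∑ t ∈ range (N - v + 1), ((N-v).choose t : ℝ) * y^t = (1+y)^(N-v) := by
    have h := add_pow y 1 (N - v)
    simp only [one_pow, mul_one] at h
    rw [show (1:ℝ) + y = y + 1 from by ring, h]
    exact Finset.sum_congr rfl fun t _ => by ring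
  rw [hbin]

/-- Triangle reindexing, grouping by the inner index. -/
private lemma sum_triangle {M : Type*} [AddCommMonoid M] (s : ℕ) (f : ℕ → ℕ → M) :
    ∑ v ∈ range s, ∑ t ∈ range (v+1), f v t
      = ∑ t ∈ range s, ∑ w ∈ range (s-t), f (t+w) t := by
  induction s with
  | zero => simp
  | succ s ih =>
    have h1 : ∀ t ∈ range s, ∑ w ∈ range (s+1-t), f (t+w) t
        = (∑ w ∈ range (s-t), f (t+w) t) + f s t := by
      intro t ht
      rw [mem_range] at ht
      rw [show s+1-t = (s-t)+1 from by omega, Finset.sum_range_succ,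
        show t+(s-t) = s from by omega]
    have hrhs : ∑ t ∈ range (s+1), ∑ w ∈ range (s+1-t), f (t+w) t
        = (∑ t ∈ range s, ∑ w ∈ range (s-t), f (t+w) t) + ∑ t ∈ range (s+1), f s t := by
      rw [Finset.sum_range_succ (fun t => ∑ w ∈ range (s+1-t), f (t+w) t) s]
      rw [Finset.sum_congr rfl h1, Finset.sum_add_distrib]
      rw [show s+1-s = 1 from by omega, Finset.sum_range_one, Nat.add_zero,
        Finset.sum_range_succ (fun t => f s t) s]
      rw [add_assoc]
    rw [Finset.sum_range_succ, ih, hrhs]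

/-- Triangle reindexing, grouping by the difference of indices. -/
private lemma sum_triangle' {M : Type*} [AddCommMonoid M] (s : ℕ) (f : ℕ → ℕ → M) :
    ∑ v ∈ range s, ∑ t ∈ range (v+1), f v t
      = ∑ j ∈ range s, ∑ u ∈ range (s-j), f (j+u) u := by
  have h := sum_triangle s (fun v t => f v (v - t))
  have hl : ∑ v ∈ range s, ∑ t ∈ range (v+1), f v (v - t)
      = ∑ v ∈ range s, ∑ t ∈ range (v+1), f v t := by
    refine Finset.sum_congr rfl fun v _ => ?_
    have h2 := Finset.sum_range_reflect (fun t => f v t) (v+1)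
    simpa using h2
  have hr : ∑ j ∈ range s, ∑ u ∈ range (s-j), f (j+u) ((j+u) - j)
      = ∑ j ∈ range s, ∑ u ∈ range (s-j), f (j+u) u := by
    refine Finset.sum_congr rfl fun j _ => Finset.sum_congr rfl fun u _ => ?_
    rw [Nat.add_sub_cancel_left]
  rw [← hl, h, hr]

private lemma keyA (s k : ℕ) (hs : 0 < s) (hk : k < s) :
    ∑ v ∈ range s, (-1:ℝ)^v * ((2*s-2-v).choose (s-1-v) : ℝ) * (k.choose v : ℝ)
      = ((2*s-2-k).choose (s-1) : ℝ) := by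
  have h := keyS_real k (2*s-2) (s-1) (by omega)
  rw [show s - 1 + 1 = s from by omega] at h
  rw [if_pos (by omega)] at h
  exact h

private lemma LOW (n s : ℕ) (hs : 0 < s) (hsn : s ≤ n) (x : ℝ) :
    ∑ t ∈ range s, (-1:ℝ)^t * ((n+s-1).choose t : ℝ) * ((n-1-t).choose (s-1-t) : ℝ) * x^t
      = (-1:ℝ)^(s-1) * ∑ k ∈ range s,
          ((n+s-1).choose k : ℝ) * ((2*s-2-k).choose (s-1) : ℝ) * (x-1)^k := by
  symm
  rw [Finset.mul_sum]
  have hexp : ∀ k ∈ range s, (-1:ℝ)^(s-1) * (((n+s-1).choose k : ℝ) * ((2*s-2-k).choose (s-1) : ℝ) * (x-1)^k)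
      = ∑ t ∈ range (k+1),
          (-1:ℝ)^(s-1) * ((n+s-1).choose k : ℝ) * ((2*s-2-k).choose (s-1) : ℝ)
            * (x^t * (-1)^(k-t) * (k.choose t : ℝ)) := by
    intro k _
    rw [← Finset.mul_sum]
    have h2 : (x - 1)^k = ∑ t ∈ range (k+1), x^t * (-1:ℝ)^(k-t) * (k.choose t : ℝ) := by
      rw [show x - 1 = x + (-1) from by ring, add_pow x (-1 : ℝ) k]
    rw [h2]
    ring
  rw [Finset.sum_congr rfl hexp]
  rw [sum_triangle s (fun k t => (-1:ℝ)^(s-1) * ((n+s-1).choose k : ℝ) * ((2*s-2-k).choose (s-1) : ℝ)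
      * (x^t * (-1)^(k-t) * (k.choose t : ℝ)))]
  refine Finset.sum_congr rfl fun t ht => ?_
  rw [mem_range] at ht
  have hterm : ∀ w ∈ range (s-t),
      (-1:ℝ)^(s-1) * ((n+s-1).choose (t+w) : ℝ) * ((2*s-2-(t+w)).choose (s-1) : ℝ)
        * (x^t * (-1)^(t+w-t) * ((t+w).choose t : ℝ))
      = ((-1:ℝ)^(s-1) * ((n+s-1).choose t : ℝ) * x^t)
        * ((-1:ℝ)^w * ((2*s-2-t-w).choose (s-1-t-w) : ℝ) * ((n+s-1-t).choose w : ℝ)) := by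
    intro w hw
    rw [mem_range] at hw
    have hmul : (n+s-1).choose (t+w) * (t+w).choose t = (n+s-1).choose t * (n+s-1-t).choose w := by
      have h := Nat.choose_mul (n := n+s-1) (Nat.le_add_right t w)
      simpa using h
    have hmulR : ((n+s-1).choose (t+w) : ℝ) * ((t+w).choose t : ℝ)
        = ((n+s-1).choose t : ℝ) * ((n+s-1-t).choose w : ℝ) := by exact_mod_cast hmul
    have hsymm : (2*s-2-(t+w)).choose (s-1) = (2*s-2-t-w).choose (s-1-t-w) := by
      rw [show (2*s-2-(t+w)) = 2*s-2-t-w from by omega]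
      rw [show s-1-t-w = (2*s-2-t-w) - (s-1) from by omega]
      exact (Nat.choose_symm (by omega)).symm
    rw [hsymm, show t+w-t = w from by omega]
    linear_combination ((-1:ℝ)^(s-1) * ((2*s-2-t-w).choose (s-1-t-w) : ℝ) * x^t * (-1:ℝ)^w) * hmulR
  rw [Finset.sum_congr rfl hterm, ← Finset.mul_sum, innerS n s t hs hsn ht]
  rw [show ((-1:ℝ)^(s-1) * ((n+s-1).choose t : ℝ) * x^t) * ((-1:ℝ)^(s-1-t) * ((n-1-t).choose (s-1-t) : ℝ))
      = ((-1:ℝ)^(s-1) * (-1:ℝ)^(s-1-t)) * ((n+s-1).choose t : ℝ) * ((n-1-t).choose (s-1-t) : ℝ) * x^t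
      from by ring, sign_combine s t ht]

private lemma HIGH (n s : ℕ) (hs : 0 < s) (hsn : s ≤ n) (x : ℝ) :
    ∑ j ∈ range s, (-1:ℝ)^j * ((n+s-1).choose j : ℝ) * ((n-1-j).choose (s-1-j) : ℝ) * x^(n+s-1-j)
      = (-1:ℝ)^(s-1) * ∑ v ∈ range s,
          (-1:ℝ)^v * ((2*s-2-v).choose (s-1-v) : ℝ) * ((n+s-1).choose v : ℝ) * (x-1)^v * x^(n+s-1-v) := by
  symm
  rw [Finset.mul_sum]
  have hexp : ∀ v ∈ range s,
      (-1:ℝ)^(s-1) * ((-1:ℝ)^v * ((2*s-2-v).choose (s-1-v) : ℝ) * ((n+s-1).choose v : ℝ) * (x-1)^v * x^(n+s-1-v))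
      = ∑ t ∈ range (v+1),
          (-1:ℝ)^(s-1) * (-1:ℝ)^v * ((2*s-2-v).choose (s-1-v) : ℝ) * ((n+s-1).choose v : ℝ) * x^(n+s-1-v)
            * (x^t * (-1)^(v-t) * (v.choose t : ℝ)) := by
    intro v _
    rw [← Finset.mul_sum]
    have h2 : (x - 1)^v = ∑ t ∈ range (v+1), x^t * (-1:ℝ)^(v-t) * (v.choose t : ℝ) := by
      rw [show x - 1 = x + (-1) from by ring, add_pow x (-1 : ℝ) v]
    rw [h2]
    ring
  rw [Finset.sum_congr rfl hexp]
  rw [sum_triangle' s (fun v t =>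
      (-1:ℝ)^(s-1) * (-1:ℝ)^v * ((2*s-2-v).choose (s-1-v) : ℝ) * ((n+s-1).choose v : ℝ) * x^(n+s-1-v)
        * (x^t * (-1)^(v-t) * (v.choose t : ℝ)))]
  refine Finset.sum_congr rfl fun j hj => ?_
  rw [mem_range] at hj
  have hterm : ∀ u ∈ range (s-j),
      (-1:ℝ)^(s-1) * (-1:ℝ)^(j+u) * ((2*s-2-(j+u)).choose (s-1-(j+u)) : ℝ) * ((n+s-1).choose (j+u) : ℝ)
          * x^(n+s-1-(j+u)) * (x^u * (-1)^(j+u-u) * ((j+u).choose u : ℝ))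
      = ((-1:ℝ)^(s-1) * ((n+s-1).choose j : ℝ) * x^(n+s-1-j))
        * ((-1:ℝ)^u * ((2*s-2-j-u).choose (s-1-j-u) : ℝ) * ((n+s-1-j).choose u : ℝ)) := by
    intro u hu
    rw [mem_range] at hu
    have hmul : (n+s-1).choose (j+u) * (j+u).choose j = (n+s-1).choose j * (n+s-1-j).choose u := by
      have h := Nat.choose_mul (n := n+s-1) (Nat.le_add_right j u)
      simpa using h
    have hmulR : ((n+s-1).choose (j+u) : ℝ) * ((j+u).choose j : ℝ)
        = ((n+s-1).choose j : ℝ) * ((n+s-1-j).choose u : ℝ) := by exact_mod_cast hmul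
    have hsymm : ((j+u).choose u : ℝ) = ((j+u).choose j : ℝ) := by
      exact_mod_cast congrArg (fun m : ℕ => (m : ℝ)) (Nat.choose_symm_add (a := j) (b := u)).symm
    have hx : x^(n+s-1-(j+u)) * x^u = x^(n+s-1-j) := by
      rw [← pow_add, show n+s-1-(j+u) + u = n+s-1-j from by omega]
    have hsgn : (-1:ℝ)^(j+u) * (-1:ℝ)^(j+u-u) = (-1:ℝ)^u := by
      rw [show j+u-u = j from by omega, pow_add, show (-1:ℝ)^j * (-1:ℝ)^u * (-1:ℝ)^j
        = ((-1:ℝ)^j * (-1:ℝ)^j) * (-1:ℝ)^u from by ring, ← pow_add,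
        (show Even (j + j) from ⟨j, rfl⟩).neg_one_pow, one_mul]
    calc (-1:ℝ)^(s-1) * (-1:ℝ)^(j+u) * ((2*s-2-(j+u)).choose (s-1-(j+u)) : ℝ) * ((n+s-1).choose (j+u) : ℝ)
          * x^(n+s-1-(j+u)) * (x^u * (-1)^(j+u-u) * ((j+u).choose u : ℝ))
        = ((-1:ℝ)^(j+u) * (-1:ℝ)^(j+u-u)) * (-1:ℝ)^(s-1) * ((2*s-2-(j+u)).choose (s-1-(j+u)) : ℝ)
          * (((n+s-1).choose (j+u) : ℝ) * ((j+u).choose j : ℝ))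
          * (x^(n+s-1-(j+u)) * x^u) := by rw [← hsymm]; ring
      _ = ((-1:ℝ)^(s-1) * ((n+s-1).choose j : ℝ) * x^(n+s-1-j))
          * ((-1:ℝ)^u * ((2*s-2-j-u).choose (s-1-j-u) : ℝ) * ((n+s-1-j).choose u : ℝ)) := by
          rw [hsgn, hmulR, hx, show (2*s-2-(j+u)) = 2*s-2-j-u from by omega,
            show (s-1-(j+u)) = s-1-j-u from by omega]
          ring
  rw [Finset.sum_congr rfl hterm, ← Finset.mul_sum, innerS n s j hs hsn hj]
  rw [show ((-1:ℝ)^(s-1) * ((n+s-1).choose j : ℝ) * x^(n+s-1-j)) * ((-1:ℝ)^(s-1-j) * ((n-1-j).choose (s-1-j) : ℝ))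
      = ((-1:ℝ)^(s-1) * (-1:ℝ)^(s-1-j)) * ((n+s-1).choose j : ℝ) * ((n-1-j).choose (s-1-j) : ℝ) * x^(n+s-1-j)
      from by ring, sign_combine s j hj]

private lemma CORE (n s : ℕ) (hs : 0 < s) (hsn : s ≤ n) (x : ℝ) :
    ∑ j ∈ range s, (-1:ℝ)^j * ((n+s-1).choose j : ℝ) * ((n-1-j).choose (s-1-j) : ℝ)
        * (x^j - x^(n+s-1-j))
      = - ∑ k ∈ Finset.Icc (2*s-1) (n+s-1),
          ((n+s-1).choose k : ℝ) * ((k-s).choose (s-1) : ℝ) * (x-1)^k := by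
  have hext : ∑ k ∈ Finset.Icc (2*s-1) (n+s-1),
      ((n+s-1).choose k : ℝ) * ((k-s).choose (s-1) : ℝ) * (x-1)^k
      = ∑ k ∈ Finset.Icc s (n+s-1),
        ((n+s-1).choose k : ℝ) * ((k-s).choose (s-1) : ℝ) * (x-1)^k := by
    refine Finset.sum_subset ?_ ?_
    · intro k hk
      rw [mem_Icc] at *
      constructor <;> omega
    · intro k hk hk2
      rw [mem_Icc] at hk hk2
      rw [Nat.choose_eq_zero_of_lt (show k - s < s - 1 from by omega)]
      simp
  have hfa : ∑ k ∈ Finset.Icc s (n+s-1),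
      ((n+s-1).choose k : ℝ) * ((k-s).choose (s-1) : ℝ) * (x-1)^k
      = (-1:ℝ)^(s-1) * ∑ k ∈ Finset.Icc s (n+s-1),
        ((n+s-1).choose k : ℝ) * (x-1)^k
          * ∑ v ∈ range s, (-1:ℝ)^v * ((2*s-2-v).choose (s-1-v) : ℝ) * (k.choose v : ℝ) := by
    rw [Finset.mul_sum]
    refine Finset.sum_congr rfl fun k hk => ?_
    rw [mem_Icc] at hk
    rw [fact1 s k hs hk.1]
    ring
  have hsplit : ∑ k ∈ Finset.Icc s (n+s-1),
      ((n+s-1).choose k : ℝ) * (x-1)^k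
        * ∑ v ∈ range s, (-1:ℝ)^v * ((2*s-2-v).choose (s-1-v) : ℝ) * (k.choose v : ℝ)
      = (∑ k ∈ range (n+s-1+1),
          ((n+s-1).choose k : ℝ) * (x-1)^k
            * ∑ v ∈ range s, (-1:ℝ)^v * ((2*s-2-v).choose (s-1-v) : ℝ) * (k.choose v : ℝ))
        - ∑ k ∈ range s,
          ((n+s-1).choose k : ℝ) * (x-1)^k
            * ∑ v ∈ range s, (-1:ℝ)^v * ((2*s-2-v).choose (s-1-v) : ℝ) * (k.choose v : ℝ) := by
    rw [← Finset.Ico_add_one_right_eq_Icc, Finset.sum_Ico_eq_sub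
      (fun k => ((n+s-1).choose k : ℝ) * (x-1)^k
        * ∑ v ∈ range s, (-1:ℝ)^v * ((2*s-2-v).choose (s-1-v) : ℝ) * (k.choose v : ℝ))
      (show s ≤ n+s-1+1 from by omega)]
  have hfull : ∑ k ∈ range (n+s-1+1),
      ((n+s-1).choose k : ℝ) * (x-1)^k
        * ∑ v ∈ range s, (-1:ℝ)^v * ((2*s-2-v).choose (s-1-v) : ℝ) * (k.choose v : ℝ)
      = ∑ v ∈ range s,
          (-1:ℝ)^v * ((2*s-2-v).choose (s-1-v) : ℝ) * ((n+s-1).choose v : ℝ) * (x-1)^v * x^(n+s-1-v) := by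
    have h1 : ∀ k ∈ range (n+s-1+1),
        ((n+s-1).choose k : ℝ) * (x-1)^k
          * ∑ v ∈ range s, (-1:ℝ)^v * ((2*s-2-v).choose (s-1-v) : ℝ) * (k.choose v : ℝ)
        = ∑ v ∈ range s, ((-1:ℝ)^v * ((2*s-2-v).choose (s-1-v) : ℝ))
            * (((n+s-1).choose k : ℝ) * (k.choose v : ℝ) * (x-1)^k) := by
      intro k _
      rw [Finset.mul_sum]
      exact Finset.sum_congr rfl fun v _ => by ring
    rw [Finset.sum_congr rfl h1, Finset.sum_comm]
    refine Finset.sum_congr rfl fun v hv => ?_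
    rw [mem_range] at hv
    rw [← Finset.mul_sum, binom_aux (n+s-1) v (by omega) (x-1),
      show (1:ℝ) + (x-1) = x from by ring]
    ring
  have hB : ∑ k ∈ range s,
      ((n+s-1).choose k : ℝ) * (x-1)^k
        * ∑ v ∈ range s, (-1:ℝ)^v * ((2*s-2-v).choose (s-1-v) : ℝ) * (k.choose v : ℝ)
      = ∑ k ∈ range s, ((n+s-1).choose k : ℝ) * ((2*s-2-k).choose (s-1) : ℝ) * (x-1)^k := by
    refine Finset.sum_congr rfl fun k hk => ?_
    rw [mem_range] at hk
    rw [keyA s k hs hk]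
    ring
  have hL : ∑ j ∈ range s, (-1:ℝ)^j * ((n+s-1).choose j : ℝ) * ((n-1-j).choose (s-1-j) : ℝ)
        * (x^j - x^(n+s-1-j))
      = (∑ j ∈ range s, (-1:ℝ)^j * ((n+s-1).choose j : ℝ) * ((n-1-j).choose (s-1-j) : ℝ) * x^j)
        - ∑ j ∈ range s, (-1:ℝ)^j * ((n+s-1).choose j : ℝ) * ((n-1-j).choose (s-1-j) : ℝ) * x^(n+s-1-j) := by
    rw [← Finset.sum_sub_distrib]
    exact Finset.sum_congr rfl fun j _ => by ring
  rw [hL, LOW n s hs hsn x, HIGH n s hs hsn x, hext, hfa, hsplit, hfull, hB]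
  ring

private lemma prod_eval (n s : ℕ) (hs : 0 < s) (hsn : s ≤ n) :
    ∀ j, j < s →
      ∏ l ∈ Finset.Icc (s-j) (s-1), ((n + l : ℕ) : ℝ) / ((n - s + l : ℕ) : ℝ)
        = ((n+s-1).choose j : ℝ) / ((n-1).choose j : ℝ) := by
  intro j
  induction j with
  | zero =>
    intro _
    rw [show s - 0 = s from rfl, Finset.Icc_eq_empty (by omega)]
    simp
  | succ j ih =>
    intro hj
    have hins : Finset.Icc (s-(j+1)) (s-1) = insert (s-(j+1)) (Finset.Icc (s-j) (s-1)) := by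
      ext a
      simp only [Finset.mem_Icc, Finset.mem_insert]
      omega
    have hnot : s-(j+1) ∉ Finset.Icc (s-j) (s-1) := by
      simp only [Finset.mem_Icc]
      omega
    rw [hins, Finset.prod_insert hnot, ih (by omega)]
    rw [show n + (s-(j+1)) = n+s-1-j from by omega,
      show n - s + (s-(j+1)) = n-1-j from by omega]
    have e1 : ((n+s-1).choose (j+1) : ℝ) * (j+1) = ((n+s-1).choose j : ℝ) * ((n+s-1-j : ℕ) : ℝ) := by
      exact_mod_cast congrArg (fun m : ℕ => (m:ℝ)) (Nat.choose_succ_right_eq (n+s-1) j)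
    have e2 : ((n-1).choose (j+1) : ℝ) * (j+1) = ((n-1).choose j : ℝ) * ((n-1-j : ℕ) : ℝ) := by
      exact_mod_cast congrArg (fun m : ℕ => (m:ℝ)) (Nat.choose_succ_right_eq (n-1) j)
    have hd1 : ((n-1-j : ℕ) : ℝ) ≠ 0 := Nat.cast_ne_zero.mpr (by omega)
    have hd2 : ((n-1).choose j : ℝ) ≠ 0 :=
      Nat.cast_ne_zero.mpr (Nat.choose_pos (show j ≤ n-1 from by omega)).ne'
    have hd3 : ((n-1).choose (j+1) : ℝ) ≠ 0 :=
      Nat.cast_ne_zero.mpr (Nat.choose_pos (show j+1 ≤ n-1 from by omega)).ne'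
    rw [div_mul_div_comm, div_eq_div_iff (by exact mul_ne_zero hd1 hd2) hd3]
    linear_combination (-((n-1).choose (j+1) : ℝ)) * e1 + ((n+s-1).choose (j+1) : ℝ) * e2

theorem Uss_tilde_closed_form (s n : ℕ) (hs : 0 < s) (hsn : s ≤ n) (ξ : ℝ) :
    ∑ p ∈ Finset.Icc 1 s,
      (-1 : ℝ) ^ (s + p) * (Nat.choose (s - 1) (p - 1) : ℝ) *
        (∏ l ∈ Finset.Icc p (s - 1), ((n + l : ℕ) : ℝ) / ((n - s + l : ℕ) : ℝ)) *
        ((1 + ξ) ^ (s - p) - (1 + ξ) ^ (n + p - 1))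
      = -((Nat.choose (n - 1) (s - 1) : ℝ)⁻¹) *
          ∑ k ∈ Finset.Icc (2 * s - 1) (n + s - 1),
            (Nat.choose (n + s - 1) k : ℝ) * (Nat.choose (k - s) (s - 1) : ℝ) * ξ ^ k := by
  rw [show Finset.Icc 1 s = Finset.Ico 1 (s+1) from (Finset.Ico_add_one_right_eq_Icc 1 s).symm,
    Finset.sum_Ico_eq_sum_range, show s+1-1 = s from rfl]
  conv_lhs => rw [← Finset.sum_range_reflect]
  have hterm : ∀ j ∈ range s,
      (-1 : ℝ) ^ (s + (1 + (s-1-j))) * (Nat.choose (s - 1) (1 + (s-1-j) - 1) : ℝ) *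
        (∏ l ∈ Finset.Icc (1 + (s-1-j)) (s - 1), ((n + l : ℕ) : ℝ) / ((n - s + l : ℕ) : ℝ)) *
        ((1 + ξ) ^ (s - (1 + (s-1-j))) - (1 + ξ) ^ (n + (1 + (s-1-j)) - 1))
      = ((n-1).choose (s-1) : ℝ)⁻¹ *
          ((-1:ℝ)^j * ((n+s-1).choose j : ℝ) * ((n-1-j).choose (s-1-j) : ℝ)
            * ((1+ξ)^j - (1+ξ)^(n+s-1-j))) := by
    intro j hj
    rw [mem_range] at hj
    rw [show 1 + (s-1-j) = s - j from by omega]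
    rw [show s - (s-j) = j from by omega,
      show n + (s-j) - 1 = n+s-1-j from by omega,
      show s - j - 1 = s-1-j from by omega]
    rw [show (-1:ℝ)^(s+(s-j)) = (-1:ℝ)^j from by
      rw [show s+(s-j) = 2*(s-j)+j from by omega, pow_add, pow_mul, neg_one_sq, one_pow, one_mul]]
    rw [Nat.choose_symm (show j ≤ s-1 from by omega)]
    rw [prod_eval n s hs hsn j hj]
    have cR : ((n-1).choose (s-1) : ℝ) * ((s-1).choose j : ℝ)
        = ((n-1).choose j : ℝ) * ((n-1-j).choose (s-1-j) : ℝ) := by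
      exact_mod_cast congrArg (fun m : ℕ => (m:ℝ))
        (Nat.choose_mul (n := n-1) (show j ≤ s-1 from by omega))
    have hd1 : ((n-1).choose j : ℝ) ≠ 0 :=
      Nat.cast_ne_zero.mpr (Nat.choose_pos (show j ≤ n-1 from by omega)).ne'
    have hd2 : ((n-1).choose (s-1) : ℝ) ≠ 0 :=
      Nat.cast_ne_zero.mpr (Nat.choose_pos (show s-1 ≤ n-1 from by omega)).ne'
    field_simp
    linear_combination (((n+s-1).choose j : ℝ)
      * ((1+ξ)^j - (1+ξ)^(n+s-1-j))) * cR
  rw [Finset.sum_congr rfl hterm, ← Finset.mul_sum]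
  have hcore := CORE n s hs hsn (1+ξ)
  rw [show (1:ℝ)+ξ-1 = ξ from by ring] at hcore
  rw [hcore]
  ring
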